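/- Let Γ act on V by γ_x(v) = λ(x)v + τ(x) as in the parabolic type (ii) with ℓ-symmetric a : T → N satisfying ker(1 + t·a) = 0 for all t. Then for all u, v ∈ V and x ∈ T: ℓ(γ_x(u) − v, γ_x(u) − v) = ℓ(x + l₀(v)·ax, x + l₀(u)·ax) + (terms affine in x). In particular, for fixed v and u in a small neighborhood of v, the quadratic part is negative definite in x, so only finitely many x ∈ Γ satisfy ℓ(γ_x(u) − v, γ_x(u) − v) ≥ 0; hence V/Γ is strictly causal. -/

import Mathlib

open Set

/-- A symmetric bilinear form of Lorentzian signature `(+,−,…,−)`. -/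
def IsLorentzian {V : Type*} [AddCommGroup V] [Module ℝ V]
    (ℓ : V →ₗ[ℝ] V →ₗ[ℝ] ℝ) : Prop :=
  (∀ u w : V, ℓ u w = ℓ w u) ∧
  ∃ (n : ℕ) (e : Module.Basis (Fin (n + 1)) ℝ V),
    (∀ i j, i ≠ j → ℓ (e i) (e j) = 0) ∧ ℓ (e 0) (e 0) = 1 ∧
    ∀ i, i ≠ 0 → ℓ (e i) (e i) = -1

/-- `ν(x)v = v + ℓ(v,v₀)x − (ℓ(v,x) + ½ ℓ(v,v₀) ℓ(x,x)) v₀`. -/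
noncomputable def nuMap {V : Type*} [AddCommGroup V] [Module ℝ V]
    (ℓ : V →ₗ[ℝ] V →ₗ[ℝ] ℝ) (v₀ x : V) : V →ₗ[ℝ] V where
  toFun v := v + ℓ v v₀ • x - (ℓ v x + (1 / 2) * ℓ v v₀ * ℓ x x) • v₀
  map_add' u w := by
    simp only [map_add, LinearMap.add_apply]
    module
  map_smul' c v := by
    simp only [map_smul, LinearMap.smul_apply, RingHom.id_apply, smul_eq_mul]
    module

/-- The parabolic affine action `γ_x(v) = ν(ax)v + x − ½ℓ(ax,x)v₀` of type (ii). -/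
noncomputable def gammaAct {V : Type*} [AddCommGroup V] [Module ℝ V]
    (ℓ : V →ₗ[ℝ] V →ₗ[ℝ] ℝ) (v₀ : V) {T : Submodule ℝ V} (a : T →ₗ[ℝ] V)
    (x : T) (v : V) : V :=
  nuMap ℓ v₀ (a x) v + (x : V) - ((1 / 2) * ℓ (a x) (x : V)) • v₀

/-- Formula (30): the exact quadratic-affine expansion of `ℓ(γ_x u − v, γ_x u − v)`. -/
theorem gammaAct_quadratic_formula {V : Type*} [AddCommGroup V] [Module ℝ V]
    (ℓ : V →ₗ[ℝ] V →ₗ[ℝ] ℝ) (hs : ∀ u w : V, ℓ u w = ℓ w u)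
    (v₀ : V) (hv₀ : ℓ v₀ v₀ = 0)
    {T : Submodule ℝ V}
    (hT : ∀ x ∈ T, ℓ x v₀ = 0)
    (a : T →ₗ[ℝ] V)
    (haN : ∀ x : T, ℓ (a x) v₀ = 0)
    (u v : V) (x : T) :
    ℓ (gammaAct ℓ v₀ a x u - v) (gammaAct ℓ v₀ a x u - v) =
      ℓ ((x : V) + ℓ v v₀ • a x) ((x : V) + ℓ u v₀ • a x)
      + (2 * ℓ (u - v) (x : V) + 2 * ℓ u v₀ * ℓ (u - v) (a x)
         - 2 * (ℓ u v₀ - ℓ v v₀) * ℓ u (a x))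
      + ℓ (u - v) (u - v) := by
  have hX : ℓ (x : V) v₀ = 0 := hT x x.2
  have hA : ℓ (a x) v₀ = 0 := haN x
  have hw : gammaAct ℓ v₀ a x u - v =
      ((u - v) + ℓ u v₀ • a x + (x : V)) +
      (-(ℓ u (a x) + (1/2) * ℓ u v₀ * ℓ (a x) (a x) + (1/2) * ℓ (a x) (x : V))) • v₀ := by
    simp only [gammaAct, nuMap, LinearMap.coe_mk, AddHom.coe_mk]
    module
  rw [hw]
  simp only [map_add, map_sub, map_smul, LinearMap.add_apply, LinearMap.sub_apply,
    LinearMap.smul_apply, smul_eq_mul]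
  rw [hs v₀ u, hs v₀ v, hs v₀ (a x), hs v₀ (x : V), hs v u, hs (a x) u, hs ((x : V)) u,
    hs (a x) v, hs ((x : V)) v, hs ((x : V)) (a x)]
  rw [hX, hA, hv₀]
  ring

/-- A vector orthogonal to a timelike vector is spacelike (or zero). -/
theorem lorentzian_neg_on_perp {V : Type*} [AddCommGroup V] [Module ℝ V]
    (ℓ : V →ₗ[ℝ] V →ₗ[ℝ] ℝ) (hL : IsLorentzian ℓ)
    (z : V) (hz : 0 < ℓ z z) (y : V) (hyz : ℓ y z = 0) :
    ℓ y y ≤ 0 ∧ (ℓ y y = 0 → y = 0) := by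
  obtain ⟨hs, n, e, horth, h0, hneg⟩ := hL
  have expand : ∀ p q : V, ℓ p q =
      e.repr p 0 * e.repr q 0 - ∑ i ∈ Finset.univ.erase 0, e.repr p i * e.repr q i := by
    intro p q
    have e1 : ℓ p q = ∑ i, e.repr p i * e.repr q i * ℓ (e i) (e i) := by
      conv_lhs => rw [← e.sum_repr p, ← e.sum_repr q]
      simp only [map_sum, map_smul, LinearMap.sum_apply, LinearMap.smul_apply, smul_eq_mul]
      refine Finset.sum_congr rfl fun i _ => ?_
      rw [Finset.sum_eq_single i (fun j _ hj => by rw [horth j i hj]; ring)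
        (fun h => absurd (Finset.mem_univ i) h)]
      ring
    rw [e1, ← Finset.add_sum_erase _ _ (Finset.mem_univ (0 : Fin (n+1))), h0]
    have e2 : ∑ i ∈ Finset.univ.erase 0, e.repr p i * e.repr q i * ℓ (e i) (e i)
        = ∑ i ∈ Finset.univ.erase 0, -(e.repr p i * e.repr q i) := by
      refine Finset.sum_congr rfl fun i hi => ?_
      rw [hneg i (Finset.ne_of_mem_erase hi)]; ring
    rw [e2, Finset.sum_neg_distrib]; ring
  set s : Finset (Fin (n+1)) := Finset.univ.erase 0 with hsdef
  set p0 := e.repr y 0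
  set z0 := e.repr z 0
  have cs : (∑ i ∈ s, e.repr y i * e.repr z i)^2 ≤
      (∑ i ∈ s, (e.repr y i)^2) * (∑ i ∈ s, (e.repr z i)^2) :=
    Finset.sum_mul_sq_le_sq_mul_sq s _ _
  have hyy : ℓ y y = p0^2 - ∑ i ∈ s, (e.repr y i)^2 := by
    rw [expand]; congr 1; · ring
    · exact Finset.sum_congr rfl fun i _ => (sq _).symm
  have hzz : ℓ z z = z0^2 - ∑ i ∈ s, (e.repr z i)^2 := by
    rw [expand]; congr 1; · ring
    · exact Finset.sum_congr rfl fun i _ => (sq _).symm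
  have hcross : p0 * z0 = ∑ i ∈ s, e.repr y i * e.repr z i := by
    have := expand y z; rw [hyz] at this; linarith
  have hSz : (0:ℝ) ≤ ∑ i ∈ s, (e.repr z i)^2 := Finset.sum_nonneg fun i _ => sq_nonneg _
  have hSy : (0:ℝ) ≤ ∑ i ∈ s, (e.repr y i)^2 := Finset.sum_nonneg fun i _ => sq_nonneg _
  have hz2 : ∑ i ∈ s, (e.repr z i)^2 < z0^2 := by rw [hzz] at hz; linarith
  have hz0 : 0 < z0^2 := lt_of_le_of_lt hSz hz2
  have key : p0^2 * z0^2 ≤ (∑ i ∈ s, (e.repr y i)^2) * z0^2 := by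
    calc p0^2 * z0^2 = (p0*z0)^2 := by ring
    _ ≤ (∑ i ∈ s, (e.repr y i)^2) * (∑ i ∈ s, (e.repr z i)^2) := by rw [hcross]; exact cs
    _ ≤ (∑ i ∈ s, (e.repr y i)^2) * z0^2 := by
        exact mul_le_mul_of_nonneg_left (le_of_lt hz2) hSy
  have hmain : p0^2 ≤ ∑ i ∈ s, (e.repr y i)^2 :=
    le_of_mul_le_mul_right (by linarith [key]) hz0
  constructor
  · rw [hyy]; linarith
  · intro h0'
    rw [hyy] at h0'
    have hp0 : p0 = 0 := by
      by_contra hp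
      have hp2 : 0 < p0^2 := by
        rcases lt_or_gt_of_ne hp with h|h; exacts [sq_pos_of_neg h, sq_pos_of_pos h]
      have heq : p0^2 = ∑ i ∈ s, (e.repr y i)^2 := by linarith
      have h3 : (p0*z0)^2 ≤ p0^2 * (∑ i ∈ s, (e.repr z i)^2) := by
        rw [hcross]; calc (∑ i ∈ s, e.repr y i * e.repr z i)^2
            ≤ (∑ i ∈ s, (e.repr y i)^2) * (∑ i ∈ s, (e.repr z i)^2) := cs
          _ = p0^2 * (∑ i ∈ s, (e.repr z i)^2) := by rw [heq]
      have h4 : z0^2 ≤ ∑ i ∈ s, (e.repr z i)^2 := by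
        have h' : p0^2 * z0^2 ≤ p0^2 * (∑ i ∈ s, (e.repr z i)^2) := by
          calc p0^2 * z0^2 = (p0*z0)^2 := by ring
          _ ≤ _ := h3
        exact le_of_mul_le_mul_left h' hp2
      linarith
    have hsum : ∑ i ∈ s, (e.repr y i)^2 = 0 := by
      rw [hp0] at h0'; simpa using h0'.symm
    have hall : ∀ i ∈ s, e.repr y i = 0 := by
      intro i hi
      have := (Finset.sum_eq_zero_iff_of_nonneg (fun i _ => sq_nonneg (e.repr y i))).mp hsum i hi
      exact pow_eq_zero_iff (n := 2) (by norm_num) |>.mp this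
    have hrepr : e.repr y = 0 := by
      ext i
      by_cases hi : i = 0
      · rw [hi]; simpa using hp0
      · simpa using hall i (Finset.mem_erase.mpr ⟨hi, Finset.mem_univ i⟩)
    exact e.repr.map_eq_zero_iff.mp hrepr

set_option maxHeartbeats 2000000 in
theorem parabolic_quotient_strictly_causal
    {V : Type*} [NormedAddCommGroup V] [NormedSpace ℝ V] [FiniteDimensional ℝ V]
    (ℓ : V →ₗ[ℝ] V →ₗ[ℝ] ℝ) (hL : IsLorentzian ℓ)
    (v₀ v₁ : V) (hv₀ : ℓ v₀ v₀ = 0) (hv₁ : ℓ v₁ v₁ = 0) (hv₀v₁ : ℓ v₀ v₁ = 1)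
    (C : Set V) (hCclosed : IsClosed C) (hCsub : C ⊆ {w : V | 0 ≤ ℓ w w})
    (T : Submodule ℝ V)
    (hT : ∀ x ∈ T, ℓ x v₀ = 0 ∧ ℓ x v₁ = 0)
    (a : T →ₗ[ℝ] V)
    (haN : ∀ x : T, ℓ (a x) v₀ = 0 ∧ ℓ (a x) v₁ = 0)
    (hasymm : ∀ x y : T, ℓ (a x) (y : V) = ℓ (x : V) (a y))
    (hker : ∀ (t : ℝ) (x : T), (x : V) + t • a x = 0 → x = 0)
    (Γ : AddSubgroup V) (hΓT : (Γ : Set V) ⊆ (T : Set V))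
    (hΓdisc : ∀ r : ℝ, {x ∈ (Γ : Set V) | ‖x‖ ≤ r}.Finite) :
    (∀ u v : V, ∃ (c : ℝ) (φ : V →ₗ[ℝ] ℝ), ∀ x : T,
      ℓ (gammaAct ℓ v₀ a x u - v) (gammaAct ℓ v₀ a x u - v) =
        ℓ ((x : V) + ℓ v v₀ • a x) ((x : V) + ℓ u v₀ • a x) + φ (x : V) + c) ∧
    (∀ v : V, ∃ U : Set V, v ∈ U ∧ IsOpen U ∧
      {x : T | (x : V) ∈ Γ ∧ ∃ u ∈ U,
        0 ≤ ℓ (gammaAct ℓ v₀ a x u - v) (gammaAct ℓ v₀ a x u - v)}.Finite) ∧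
    (∀ v : V, ∃ U : Set V, v ∈ U ∧ IsOpen U ∧
      (∀ w ∈ U, w ∈ closure {u : V | ∃ x : T, (x : V) ∈ Γ ∧ gammaAct ℓ v₀ a x u - v ∈ C}
        → ∃ x : T, (x : V) ∈ Γ ∧ gammaAct ℓ v₀ a x w - v ∈ C) ∧
      (∀ w ∈ U, w ∈ closure {u : V | ∃ x : T, (x : V) ∈ Γ ∧ v - gammaAct ℓ v₀ a x u ∈ C}
        → ∃ x : T, (x : V) ∈ Γ ∧ v - gammaAct ℓ v₀ a x w ∈ C)) := by
  have hs : ∀ u w : V, ℓ u w = ℓ w u := hL.1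
  have hT1 : ∀ x ∈ T, ℓ x v₀ = 0 := fun x hx => (hT x hx).1
  have haN1 : ∀ x : T, ℓ (a x) v₀ = 0 := fun x => (haN x).1
  -- the continuous bilinear version of ℓ and the basic bound
  obtain ⟨K, hK0, bound⟩ : ∃ K : ℝ, 0 ≤ K ∧ ∀ y w : V, |ℓ y w| ≤ K * ‖y‖ * ‖w‖ := by
    let ℓ₂ : V →L[ℝ] (V →L[ℝ] ℝ) :=
      LinearMap.toContinuousLinearMap
        ((LinearMap.toContinuousLinearMap : (V →ₗ[ℝ] ℝ) ≃ₗ[ℝ] (V →L[ℝ] ℝ)).toLinearMap.comp ℓ)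
    refine ⟨‖ℓ₂‖, ℓ₂.opNorm_nonneg, fun y w => ?_⟩
    have h1 : ‖ℓ₂ y w‖ ≤ ‖ℓ₂ y‖ * ‖w‖ := (ℓ₂ y).le_opNorm w
    have h2 : ‖ℓ₂ y‖ ≤ ‖ℓ₂‖ * ‖y‖ := ℓ₂.le_opNorm y
    calc |ℓ y w| = ‖ℓ₂ y w‖ := rfl
      _ ≤ ‖ℓ₂ y‖ * ‖w‖ := h1
      _ ≤ ‖ℓ₂‖ * ‖y‖ * ‖w‖ := mul_le_mul_of_nonneg_right h2 (norm_nonneg w)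
  have hcont2 : Continuous fun p : V × V => ℓ p.1 p.2 := by
    let ℓ₂ : V →L[ℝ] (V →L[ℝ] ℝ) :=
      LinearMap.toContinuousLinearMap
        ((LinearMap.toContinuousLinearMap : (V →ₗ[ℝ] ℝ) ≃ₗ[ℝ] (V →L[ℝ] ℝ)).toLinearMap.comp ℓ)
    have : Continuous fun p : V × V => ℓ₂ p.1 p.2 :=
      isBoundedBilinearMap_apply.continuous.comp
        ((ℓ₂.continuous.comp continuous_fst).prodMk continuous_snd)
    exact this
  -- negativity on N
  have hzpos : 0 < ℓ (v₀ + v₁) (v₀ + v₁) := by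
    simp only [map_add, LinearMap.add_apply]
    rw [hv₀, hv₁, hv₀v₁, hs v₁ v₀, hv₀v₁]; norm_num
  have negN : ∀ (t : ℝ) (x : T),
      ℓ ((x : V) + t • a x) ((x : V) + t • a x) ≤ 0 ∧
      (ℓ ((x : V) + t • a x) ((x : V) + t • a x) = 0 → x = 0) := by
    intro t x
    have hperp : ℓ ((x : V) + t • a x) (v₀ + v₁) = 0 := by
      simp only [map_add, map_smul, LinearMap.add_apply, LinearMap.smul_apply, smul_eq_mul,
        (hT x x.2).1, (hT x x.2).2, (haN x).1, (haN x).2]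
      ring
    obtain ⟨hle, heq⟩ := lorentzian_neg_on_perp ℓ hL (v₀ + v₁) hzpos _ hperp
    exact ⟨hle, fun h => hker t x (heq h)⟩
  -- Part 2 first (parts 1 and 3 use similar ingredients)
  have P2 : ∀ v : V, ∃ U : Set V, v ∈ U ∧ IsOpen U ∧
      {x : T | (x : V) ∈ Γ ∧ ∃ u ∈ U,
        0 ≤ ℓ (gammaAct ℓ v₀ a x u - v) (gammaAct ℓ v₀ a x u - v)}.Finite := by
    intro v
    obtain ⟨t₀, ht₀def⟩ : ∃ t₀ : ℝ, t₀ = ℓ v v₀ := ⟨_, rfl⟩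
    obtain ⟨q, hqdef⟩ : ∃ q : T → ℝ,
        q = fun x : T => ℓ ((x : V) + t₀ • a x) ((x : V) + t₀ • a x) := ⟨_, rfl⟩
    obtain ⟨cr, hcrdef⟩ : ∃ cr : T → ℝ,
        cr = fun x : T => ℓ ((x : V) + t₀ • a x) (a x) := ⟨_, rfl⟩
    have hsplit : ∀ (x : T) (s' : ℝ),
        ℓ ((x : V) + t₀ • a x) ((x : V) + s' • a x) = q x + (s' - t₀) * cr x := by
      intro x s'
      simp only [hqdef, hcrdef, map_add, map_smul, LinearMap.add_apply, LinearMap.smul_apply,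
        smul_eq_mul]
      ring
    have hqcont : Continuous q := by
      rw [hqdef]
      have h1 : Continuous fun x : T => ((x : V) + t₀ • a x) :=
        (T.subtype + t₀ • a).continuous_of_finiteDimensional
      exact hcont2.comp (h1.prodMk h1)
    have hqscale : ∀ (c : ℝ) (x : T), q (c • x) = c^2 * q x := by
      intro c x
      have h1 : ((c • x : T) : V) + t₀ • a (c • x) = c • ((x : V) + t₀ • a x) := by
        simp only [map_smul, Submodule.coe_smul]
        module
      simp only [hqdef]
      rw [h1, map_smul]
      simp only [LinearMap.smul_apply, smul_eq_mul, map_smul]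
      ring
    by_cases hS : (Metric.sphere (0 : T) 1).Nonempty
    · obtain ⟨m, hm, hq_neg⟩ : ∃ m : ℝ, 0 < m ∧ ∀ x : T, q x ≤ -m * ‖x‖^2 := by
        obtain ⟨x₀, hx₀S, hx₀max⟩ :=
          (isCompact_sphere (0 : T) 1).exists_isMaxOn hS hqcont.continuousOn
        have hx₀n : ‖x₀‖ = 1 := by simpa using mem_sphere_zero_iff_norm.mp hx₀S
        have hx₀ne : x₀ ≠ 0 := by
          intro h; rw [h, norm_zero] at hx₀n; norm_num at hx₀n
        have hm : 0 < -q x₀ := by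
          have h1 := (negN t₀ x₀).1
          have h2 := (negN t₀ x₀).2
          rcases lt_or_eq_of_le h1 with h|h
          · have hq0 : q x₀ < 0 := by rw [hqdef]; exact h
            linarith
          · exact absurd (h2 h) hx₀ne
        refine ⟨-q x₀, hm, fun x => ?_⟩
        by_cases hx : x = 0
        · subst hx
          have h0 : q 0 = 0 := by
            have := hqscale 0 0
            simpa using this
          rw [h0]
          simp
        · have hc : (0:ℝ) < ‖x‖ := norm_pos_iff.mpr hx
          have hunit : (‖x‖⁻¹ • x) ∈ Metric.sphere (0 : T) 1 := by
            rw [mem_sphere_zero_iff_norm, norm_smul, norm_inv, norm_norm,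
              inv_mul_cancel₀ hc.ne']
          have h1 : q (‖x‖⁻¹ • x) ≤ q x₀ := hx₀max hunit
          have h2 : q (‖x‖⁻¹ • x) = (‖x‖⁻¹)^2 * q x := hqscale _ _
          have h3 : (‖x‖⁻¹)^2 * q x ≤ q x₀ := h2 ▸ h1
          have h4 : ‖x‖^2 * ((‖x‖⁻¹)^2 * q x) ≤ ‖x‖^2 * q x₀ :=
            mul_le_mul_of_nonneg_left h3 (sq_nonneg _)
          have hinv : ‖x‖^2 * (‖x‖⁻¹)^2 = 1 := by
            rw [← mul_pow, mul_inv_cancel₀ hc.ne']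
            norm_num
          calc q x = ‖x‖^2 * ((‖x‖⁻¹)^2 * q x) := by rw [← mul_assoc, hinv, one_mul]
            _ ≤ ‖x‖^2 * q x₀ := h4
            _ = -(-q x₀) * ‖x‖^2 := by ring
      -- bounds for the linear part
      obtain ⟨CL, hCL0, hLb⟩ : ∃ CL : ℝ, 0 ≤ CL ∧
          ∀ x : T, ‖(x : V) + t₀ • a x‖ ≤ CL * ‖x‖ := by
        refine ⟨‖LinearMap.toContinuousLinearMap (T.subtype + t₀ • a)‖,
          (LinearMap.toContinuousLinearMap (T.subtype + t₀ • a)).opNorm_nonneg, fun x => ?_⟩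
        exact (LinearMap.toContinuousLinearMap (T.subtype + t₀ • a)).le_opNorm x
      obtain ⟨Ca, hCa0, hab⟩ : ∃ Ca : ℝ, 0 ≤ Ca ∧ ∀ x : T, ‖a x‖ ≤ Ca * ‖x‖ :=
        ⟨‖LinearMap.toContinuousLinearMap a‖, (LinearMap.toContinuousLinearMap a).opNorm_nonneg,
          fun x => (LinearMap.toContinuousLinearMap a).le_opNorm x⟩
      obtain ⟨M, hM0, hcr⟩ : ∃ M : ℝ, 0 ≤ M ∧ ∀ x : T, |cr x| ≤ M * ‖x‖^2 := by
        refine ⟨K * CL * Ca, mul_nonneg (mul_nonneg hK0 hCL0) hCa0, fun x => ?_⟩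
        have hn : (0:ℝ) ≤ ‖x‖ := norm_nonneg _
        have t1 : ‖(x : V) + t₀ • a x‖ * ‖a x‖ ≤ (CL * ‖x‖) * (Ca * ‖x‖) :=
          mul_le_mul (hLb x) (hab x) (norm_nonneg _) (mul_nonneg hCL0 hn)
        have t2 := mul_le_mul_of_nonneg_left t1 hK0
        have hcrx : |cr x| ≤ K * ‖(x : V) + t₀ • a x‖ * ‖a x‖ := by
          rw [hcrdef]; exact bound _ _
        linarith [hcrx, t2]
      obtain ⟨ε, hεdef⟩ : ∃ ε : ℝ, ε = m / (2 * (M + 1)) := ⟨_, rfl⟩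
      have hε : 0 < ε := by
        rw [hεdef]; exact div_pos hm (by linarith)
      have hεM : ε * M ≤ m / 2 := by
        rw [hεdef, div_mul_eq_mul_div, div_le_div_iff₀ (by linarith) (by norm_num : (0:ℝ) < 2)]
        have := mul_nonneg hm.le hM0
        nlinarith [this]
      obtain ⟨B0, hB0def⟩ : ∃ B0 : ℝ, B0 = K * ‖v₀‖ := ⟨_, rfl⟩
      have hB00 : 0 ≤ B0 := by rw [hB0def]; exact mul_nonneg hK0 (norm_nonneg _)
      obtain ⟨δ, hδdef⟩ : ∃ δ : ℝ, δ = ε / (B0 + 1) := ⟨_, rfl⟩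
      have hδ : 0 < δ := by
        rw [hδdef]; exact div_pos hε (by linarith)
      have hB0δ : B0 * δ ≤ ε := by
        have hd : δ * (B0 + 1) = ε := by
          rw [hδdef, div_mul_cancel₀ _ (by linarith : B0 + 1 ≠ 0)]
        linarith [hδ.le]
      obtain ⟨δ', hδ'def⟩ : ∃ d : ℝ, d = min δ 1 := ⟨_, rfl⟩
      have hδ' : 0 < δ' := by rw [hδ'def]; exact lt_min hδ one_pos
      refine ⟨Metric.ball v δ', Metric.mem_ball_self hδ', Metric.isOpen_ball, ?_⟩
      obtain ⟨Cs, hCsdef⟩ : ∃ Cs : ℝ, Cs = K * (‖v‖ + 1) * ‖v₀‖ := ⟨_, rfl⟩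
      have hCs0 : 0 ≤ Cs := by
        rw [hCsdef]
        exact mul_nonneg (mul_nonneg hK0 (by linarith [norm_nonneg v])) (norm_nonneg _)
      obtain ⟨C1, hC1def⟩ : ∃ C1 : ℝ,
          C1 = 2*K + 2*Cs*(K*Ca) + 2*ε*(K*(‖v‖+1)*Ca) := ⟨_, rfl⟩
      have hC10 : 0 ≤ C1 := by
        rw [hC1def]
        have h1 : 0 ≤ Cs*(K*Ca) := mul_nonneg hCs0 (mul_nonneg hK0 hCa0)
        have h2 : 0 ≤ ε*(K*(‖v‖+1)*Ca) :=
          mul_nonneg hε.le (mul_nonneg (mul_nonneg hK0 (by linarith [norm_nonneg v])) hCa0)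
        linarith
      obtain ⟨r, hrdef⟩ : ∃ r : ℝ, r = max 1 ((2/m)*(C1 + K + 1)) := ⟨_, rfl⟩
      have key : ∀ u ∈ Metric.ball v δ', ∀ x : T,
          0 ≤ ℓ (gammaAct ℓ v₀ a x u - v) (gammaAct ℓ v₀ a x u - v) → ‖x‖ ≤ r := by
        intro u hu x h0
        have hn0 : (0:ℝ) ≤ ‖x‖ := norm_nonneg _
        have hXn : ‖(x : V)‖ = ‖x‖ := rfl
        have huv : ‖u - v‖ < δ' := by
          rw [Metric.mem_ball, dist_eq_norm] at hu; exact hu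
        have huv1 : ‖u - v‖ ≤ 1 := by
          rw [hδ'def] at huv
          exact le_of_lt (lt_of_lt_of_le huv (min_le_right _ _))
        have huvδ : ‖u - v‖ ≤ δ := by
          rw [hδ'def] at huv
          exact le_of_lt (lt_of_lt_of_le huv (min_le_left _ _))
        have hun : ‖u‖ ≤ ‖v‖ + 1 := by
          have h' : ‖u‖ ≤ ‖u - v‖ + ‖v‖ := by
            simpa using norm_add_le (u - v) v
          linarith
        obtain ⟨s', hs'def⟩ : ∃ s' : ℝ, s' = ℓ u v₀ := ⟨_, rfl⟩
        have hf := gammaAct_quadratic_formula ℓ hs v₀ hv₀ hT1 a haN1 u v x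
        rw [← ht₀def, ← hs'def, hsplit x s'] at hf
        rw [hf] at h0
        have hst : |s' - t₀| ≤ ε := by
          have h1 : s' - t₀ = ℓ (u - v) v₀ := by
            rw [hs'def, ht₀def, map_sub, LinearMap.sub_apply]
          rw [h1]
          calc |ℓ (u - v) v₀| ≤ K * ‖u - v‖ * ‖v₀‖ := bound _ _
            _ = (K * ‖v₀‖) * ‖u - v‖ := by ring
            _ ≤ (K * ‖v₀‖) * δ :=
                mul_le_mul_of_nonneg_left huvδ (mul_nonneg hK0 (norm_nonneg _))
            _ = B0 * δ := by rw [hB0def]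
            _ ≤ ε := hB0δ
        have h1 : |ℓ (u - v) (x : V)| ≤ K * ‖x‖ := by
          calc |ℓ (u - v) (x : V)| ≤ K * ‖u - v‖ * ‖(x : V)‖ := bound _ _
            _ = (K * ‖(x : V)‖) * ‖u - v‖ := by ring
            _ ≤ (K * ‖(x : V)‖) * 1 :=
                mul_le_mul_of_nonneg_left huv1 (mul_nonneg hK0 (norm_nonneg _))
            _ = K * ‖x‖ := by rw [mul_one, hXn]
        have h2 : |ℓ (u - v) (a x)| ≤ K * (Ca * ‖x‖) := by
          calc |ℓ (u - v) (a x)| ≤ K * ‖u - v‖ * ‖a x‖ := bound _ _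
            _ = (K * ‖a x‖) * ‖u - v‖ := by ring
            _ ≤ (K * ‖a x‖) * 1 :=
                mul_le_mul_of_nonneg_left huv1 (mul_nonneg hK0 (norm_nonneg _))
            _ = K * ‖a x‖ := by rw [mul_one]
            _ ≤ K * (Ca * ‖x‖) := mul_le_mul_of_nonneg_left (hab x) hK0
        have h3 : |ℓ u (a x)| ≤ K * (‖v‖ + 1) * (Ca * ‖x‖) := by
          calc |ℓ u (a x)| ≤ K * ‖u‖ * ‖a x‖ := bound _ _
            _ ≤ K * (‖v‖ + 1) * (Ca * ‖x‖) := by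
                have hKu : K * ‖u‖ ≤ K * (‖v‖ + 1) := mul_le_mul_of_nonneg_left hun hK0
                exact mul_le_mul hKu (hab x) (norm_nonneg _)
                  (mul_nonneg hK0 (by linarith [norm_nonneg v]))
        have h4 : |s'| ≤ Cs := by
          rw [hs'def, hCsdef]
          calc |ℓ u v₀| ≤ K * ‖u‖ * ‖v₀‖ := bound _ _
            _ ≤ K * (‖v‖ + 1) * ‖v₀‖ :=
                mul_le_mul_of_nonneg_right (mul_le_mul_of_nonneg_left hun hK0) (norm_nonneg _)
        have h5 : ℓ (u - v) (u - v) ≤ K := by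
          have hb := bound (u - v) (u - v)
          have h' : K * ‖u - v‖ * ‖u - v‖ ≤ K := by
            have := mul_le_mul (mul_le_mul_of_nonneg_left huv1 hK0) huv1 (norm_nonneg _)
              (mul_nonneg hK0 zero_le_one)
            linarith
          calc ℓ (u - v) (u - v) ≤ |ℓ (u - v) (u - v)| := le_abs_self _
            _ ≤ K * ‖u - v‖ * ‖u - v‖ := hb
            _ ≤ K := h'
        have hp1 : (s' - t₀) * cr x ≤ (m/2) * ‖x‖^2 := by
          calc (s' - t₀) * cr x ≤ |(s' - t₀) * cr x| := le_abs_self _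
            _ = |s' - t₀| * |cr x| := abs_mul _ _
            _ ≤ ε * (M * ‖x‖^2) := mul_le_mul hst (hcr x) (abs_nonneg _) hε.le
            _ = (ε * M) * ‖x‖^2 := by ring
            _ ≤ (m/2) * ‖x‖^2 := mul_le_mul_of_nonneg_right hεM (sq_nonneg _)
        have hp2 : s' * ℓ (u - v) (a x) ≤ Cs * (K * (Ca * ‖x‖)) := by
          calc s' * ℓ (u - v) (a x) ≤ |s' * ℓ (u - v) (a x)| := le_abs_self _
            _ = |s'| * |ℓ (u - v) (a x)| := abs_mul _ _
            _ ≤ Cs * (K * (Ca * ‖x‖)) := mul_le_mul h4 h2 (abs_nonneg _) hCs0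
        have hp3 : -((s' - t₀) * ℓ u (a x)) ≤ ε * (K * (‖v‖ + 1) * (Ca * ‖x‖)) := by
          calc -((s' - t₀) * ℓ u (a x)) ≤ |(s' - t₀) * ℓ u (a x)| := neg_le_abs _
            _ = |s' - t₀| * |ℓ u (a x)| := abs_mul _ _
            _ ≤ ε * (K * (‖v‖ + 1) * (Ca * ‖x‖)) := mul_le_mul hst h3 (abs_nonneg _) hε.le
        have hp4 : ℓ (u - v) (x : V) ≤ K * ‖x‖ := le_trans (le_abs_self _) h1
        have hq := hq_neg x
        have hfin2 : 0 ≤ -(m/2) * ‖x‖^2 + C1 * ‖x‖ + K := by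
          rw [hC1def]
          linarith [h0, hp1, hp2, hp3, hp4, hq, h5]
        by_contra hnr
        push_neg at hnr
        rw [hrdef] at hnr
        have hn1 : 1 < ‖x‖ := lt_of_le_of_lt (le_max_left _ _) hnr
        have hn2 : (2/m)*(C1 + K + 1) < ‖x‖ := lt_of_le_of_lt (le_max_right _ _) hnr
        have hmn : 2*(C1 + K + 1) < m * ‖x‖ := by
          have h' := mul_lt_mul_of_pos_left hn2 hm
          have h'' : m * ((2/m)*(C1 + K + 1)) = 2*(C1 + K + 1) := by
            field_simp
          linarith [h', h''.symm.le, h''.le]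
        have hx2 : 2*(C1 + K + 1) * ‖x‖ < m * ‖x‖ * ‖x‖ :=
          mul_lt_mul_of_pos_right hmn (by linarith)
        have hKx : K * 1 ≤ K * ‖x‖ := mul_le_mul_of_nonneg_left (by linarith) hK0
        have hsq : ‖x‖^2 = ‖x‖ * ‖x‖ := sq ‖x‖
        linarith [hfin2, hx2, hKx, hn1, hC10, hsq]
      refine Set.Finite.subset
        ((hΓdisc r).preimage (Subtype.val_injective.injOn)) ?_
      rintro x ⟨hxΓ, u, hu, h0⟩
      exact ⟨hxΓ, key u hu x h0⟩
    · -- degenerate case: T has no unit vectors, so T = 0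
      have hzero : ∀ x : T, x = 0 := by
        intro x
        by_contra hx
        exact hS ⟨‖x‖⁻¹ • x, by
          rw [mem_sphere_zero_iff_norm, norm_smul, norm_inv, norm_norm,
            inv_mul_cancel₀ (norm_ne_zero_iff.mpr hx)]⟩
      exact ⟨Metric.ball v 1, Metric.mem_ball_self one_pos, Metric.isOpen_ball,
        Set.Finite.subset (Set.finite_singleton 0) (fun x _ => hzero x)⟩
  refine ⟨?_, P2, ?_⟩
  · -- Part 1
    intro u v
    obtain ⟨T', hcompl⟩ := Submodule.exists_isCompl T
    set pr : V →ₗ[ℝ] T := T.linearProjOfIsCompl T' hcompl with hprdef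
    refine ⟨ℓ (u - v) (u - v),
      (((2:ℝ) • ((ℓ (u - v)).comp T.subtype) + (2 * ℓ u v₀) • ((ℓ (u - v)).comp a)
        - (2 * (ℓ u v₀ - ℓ v v₀)) • ((ℓ u).comp a)).comp pr), fun x => ?_⟩
    rw [gammaAct_quadratic_formula ℓ hs v₀ hv₀ hT1 a haN1 u v x]
    have hpr : pr (x : V) = x := Submodule.linearProjOfIsCompl_apply_left hcompl x
    simp only [LinearMap.comp_apply, hpr, LinearMap.add_apply, LinearMap.sub_apply,
      LinearMap.smul_apply, smul_eq_mul, Submodule.coe_subtype]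
    try ring
  · -- Part 3
    intro v
    obtain ⟨U, hvU, hUopen, hfin⟩ := P2 v
    set F := {x : T | (x : V) ∈ Γ ∧ ∃ u ∈ U,
        0 ≤ ℓ (gammaAct ℓ v₀ a x u - v) (gammaAct ℓ v₀ a x u - v)} with hFdef
    have main : ∀ (f : T → V → V), (∀ x : T, Continuous fun u => f x u) →
        (∀ (x : T) (u : V), ℓ (f x u) (f x u) =
          ℓ (gammaAct ℓ v₀ a x u - v) (gammaAct ℓ v₀ a x u - v)) →
        ∀ w ∈ U, w ∈ closure {u : V | ∃ x : T, (x : V) ∈ Γ ∧ f x u ∈ C} →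
        ∃ x : T, (x : V) ∈ Γ ∧ f x w ∈ C := by
      intro f hfc hfq w hwU hcl
      set S := {u : V | ∃ x : T, (x : V) ∈ Γ ∧ f x u ∈ C} with hSdef
      have hex : ∀ k : ℕ, ∃ u, u ∈ S ∧ dist u w < 1/(k+1) ∧ u ∈ U := by
        intro k
        have hpos : (0:ℝ) < 1/(k+1) := by positivity
        have hO : IsOpen (Metric.ball w (1/(k+1)) ∩ U) :=
          Metric.isOpen_ball.inter hUopen
        have hwO : w ∈ Metric.ball w (1/(k+1)) ∩ U :=
          ⟨Metric.mem_ball_self hpos, hwU⟩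
        obtain ⟨u, ⟨hb, hU⟩, hSu⟩ := _root_.mem_closure_iff.mp hcl _ hO hwO
        exact ⟨u, hSu, Metric.mem_ball.mp hb, hU⟩
      choose u hu1 hu2 hu3 using hex
      have hx : ∀ k : ℕ, ∃ x : T, (x : V) ∈ Γ ∧ f x (u k) ∈ C := fun k => hu1 k
      choose x hx1 hx2 using hx
      have hxF : ∀ k : ℕ, x k ∈ F := by
        intro k
        refine ⟨hx1 k, u k, hu3 k, ?_⟩
        rw [← hfq (x k) (u k)]
        exact hCsub (hx2 k)
      haveI : Finite F := hfin.to_subtype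
      obtain ⟨y, hy⟩ := Finite.exists_infinite_fiber (fun k : ℕ => (⟨x k, hxF k⟩ : F))
      set P := (fun k : ℕ => (⟨x k, hxF k⟩ : F)) ⁻¹' {y} with hPdef
      have hPinf : P.Infinite := Set.infinite_coe_iff.mp hy
      set xinf : T := (y : T) with hxinfdef
      refine ⟨xinf, (y : F).2.1, ?_⟩
      have hclosed : f xinf w ∈ closure C := by
        rw [Metric.mem_closure_iff]
        intro ε hε
        obtain ⟨δ, hδpos, hδ⟩ := Metric.continuous_iff.mp (hfc xinf) w ε hε
        obtain ⟨N, hN⟩ := exists_nat_one_div_lt hδpos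
        obtain ⟨k, hkP, hkN⟩ := hPinf.exists_gt N
        have hxk : x k = xinf := by
          have : (⟨x k, hxF k⟩ : F) = y := hkP
          exact congrArg Subtype.val this
        have hd : dist (u k) w < δ := by
          have h1 : dist (u k) w < 1/(k+1) := hu2 k
          have h2 : (1:ℝ)/(k+1) ≤ 1/(N+1) := by
            have hc : ((N:ℝ)+1) ≤ (k:ℝ)+1 := by
              have : (N:ℝ) < (k:ℝ) := by exact_mod_cast hkN
              linarith
            apply one_div_le_one_div_of_le
            · positivity
            · exact hc
          linarith
        refine ⟨f xinf (u k), by rw [← hxk]; exact hx2 k, ?_⟩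
        have := hδ (u k) hd
        rwa [dist_comm]
      exact hCclosed.closure_subset hclosed
    have hgcont : ∀ x : T, Continuous fun u => gammaAct ℓ v₀ a x u := by
      intro x
      unfold gammaAct
      exact (((nuMap ℓ v₀ (a x)).continuous_of_finiteDimensional).add
        continuous_const).sub continuous_const
    refine ⟨U, hvU, hUopen, ?_, ?_⟩
    · intro w hwU hcl
      exact main (fun x u => gammaAct ℓ v₀ a x u - v)
        (fun x => (hgcont x).sub continuous_const) (fun x u => rfl) w hwU hcl
    · intro w hwU hcl
      refine main (fun x u => v - gammaAct ℓ v₀ a x u)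
        (fun x => continuous_const.sub (hgcont x)) (fun x u => ?_) w hwU hcl
      show ℓ (v - gammaAct ℓ v₀ a x u) (v - gammaAct ℓ v₀ a x u) =
        ℓ (gammaAct ℓ v₀ a x u - v) (gammaAct ℓ v₀ a x u - v)
      have h1 : v - gammaAct ℓ v₀ a x u = -(gammaAct ℓ v₀ a x u - v) := (neg_sub _ _).symm
      rw [h1]
      simp only [map_neg, LinearMap.neg_apply, neg_neg]
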